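/- For any positive integers h and q, Σ_{a ∈ ℤ} max(h-|a|,0)·c_q(a) ≤ h² + σ₂(q), where σ₂(q) = Σ_{d|q} d² and c_q is the Ramanujan sum; moreover if q > 1 it is at most σ₂(q). -/

import Mathlib

open Finset

/-- The Ramanujan sum `c_q(a) = Σ_{j mod q, gcd(j,q)=1} e^{2πija/q}`. -/
noncomputable def ramanujanSum (q : ℕ) (a : ℤ) : ℂ :=
  ∑ j ∈ (Finset.range q).filter (fun j => Nat.Coprime j q),
    Complex.exp (2 * Real.pi * Complex.I * (j : ℂ) * (a : ℂ) / (q : ℂ))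

section helpers
open Real

lemma sum_inv_sq_le (n : ℕ) : ∑ j ∈ Icc 1 n, (1:ℝ)/(j:ℝ)^2 ≤ 2 - 1/n := by
  induction n with
  | zero => simp
  | succ n ih =>
    rcases Nat.eq_zero_or_pos n with rfl | hn
    · norm_num
    rw [Finset.sum_Icc_succ_top (by omega)]
    have h1 : (1:ℝ)/((n+1:ℕ):ℝ)^2 ≤ 1/n - 1/(n+1:ℕ) := by
      have hn' : (0:ℝ) < n := by exact_mod_cast hn
      rw [div_sub_div _ _ (ne_of_gt hn') (by positivity), div_le_div_iff₀ (by positivity) (by positivity)]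
      push_cast
      ring_nf
      nlinarith
    linarith

lemma card_shift (h : ℕ) (a : ℤ) :
    (((range h) ×ˢ (range h)).filter (fun p => (p.1:ℤ) - (p.2:ℤ) = a)).card = h - a.natAbs := by
  rw [← Finset.card_range (h - a.natAbs)]
  rcases le_or_gt 0 a with ha | ha
  · apply Finset.card_bij' (fun p _ => p.2) (fun i _ => (i + a.natAbs, i))
    · intro p hp
      simp only [mem_filter, mem_product, mem_range] at hp
      simp only [mem_range]
      omega
    · intro i hi
      simp only [mem_range] at hi
      simp only [mem_filter, mem_product, mem_range]
      refine ⟨⟨by omega, by omega⟩, ?_⟩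
      omega
    · intro p hp
      simp only [mem_filter, mem_product, mem_range] at hp
      obtain ⟨⟨h1, h2⟩, h3⟩ := hp
      ext <;> simp <;> omega
    · intro i hi; rfl
  · apply Finset.card_bij' (fun p _ => p.1) (fun i _ => (i, i + a.natAbs))
    · intro p hp
      simp only [mem_filter, mem_product, mem_range] at hp
      simp only [mem_range]
      omega
    · intro i hi
      simp only [mem_range] at hi
      simp only [mem_filter, mem_product, mem_range]
      refine ⟨⟨by omega, by omega⟩, ?_⟩
      omega
    · intro p hp
      simp only [mem_filter, mem_product, mem_range] at hp
      obtain ⟨⟨h1, h2⟩, h3⟩ := hp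
      ext <;> simp <;> omega
    · intro i hi; rfl

lemma fejer_identity (h : ℕ) (z : ℂ) (hz : ‖z‖ = 1) :
    ∑ a ∈ Icc (-(h:ℤ)) (h:ℤ), ((max ((h:ℝ) - |(a:ℝ)|) 0 : ℝ):ℂ) * z ^ a
      = (Complex.normSq (∑ n ∈ range h, z ^ n) : ℝ) := by
  have hz0 : z ≠ 0 := by
    intro h0; rw [h0] at hz; simp at hz
  have hconj : (starRingEnd ℂ) z = z⁻¹ := by
    rw [← Complex.inv_eq_conj hz]
  rw [← Complex.mul_conj]
  rw [map_sum]
  have key : ∀ p ∈ (range h) ×ˢ (range h),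
      z ^ p.1 * (starRingEnd ℂ) (z ^ p.2) = z ^ ((p.1 : ℤ) - (p.2 : ℤ)) := by
    intro p _
    rw [map_pow, hconj, zpow_sub₀ hz0, zpow_natCast, zpow_natCast, div_eq_mul_inv, inv_pow]
  calc ∑ a ∈ Icc (-(h:ℤ)) (h:ℤ), ((max ((h:ℝ) - |(a:ℝ)|) 0 : ℝ):ℂ) * z ^ a
      = ∑ a ∈ Icc (-(h:ℤ)) (h:ℤ), ∑ p ∈ ((range h) ×ˢ (range h)).filter
          (fun p => (p.1:ℤ) - (p.2:ℤ) = a), z ^ ((p.1 : ℤ) - (p.2 : ℤ)) := by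
        refine Finset.sum_congr rfl fun a ha => ?_
        rw [Finset.sum_congr rfl (fun p hp => by
          rw [(Finset.mem_filter.1 hp).2])]
        rw [Finset.sum_const, nsmul_eq_mul, card_shift]
        congr 1
        simp only [mem_Icc] at ha
        have hle : a.natAbs ≤ h := by omega
        have h1 : |(a:ℝ)| = (a.natAbs : ℝ) := by
          rw [Nat.cast_natAbs, Int.cast_abs]
        have h2 : (0:ℝ) ≤ (h:ℝ) - (a.natAbs:ℝ) := by
          have : (a.natAbs:ℝ) ≤ h := by exact_mod_cast hle
          linarith
        have hmax : (max ((h:ℝ) - |(a:ℝ)|) 0) = ((h - a.natAbs : ℕ) : ℝ) := by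
          rw [h1, max_eq_left h2, Nat.cast_sub hle]
        exact_mod_cast congrArg (fun x : ℝ => (x:ℂ)) hmax
    _ = ∑ p ∈ (range h) ×ˢ (range h), z ^ ((p.1 : ℤ) - (p.2 : ℤ)) := by
        apply Finset.sum_fiberwise_of_maps_to
        intro p hp
        simp only [mem_product, mem_range] at hp
        simp only [mem_Icc]
        omega
    _ = ∑ p ∈ (range h) ×ˢ (range h), z ^ p.1 * (starRingEnd ℂ) (z ^ p.2) :=
        (Finset.sum_congr rfl key).symm
    _ = (∑ n ∈ range h, z ^ n) * ∑ n ∈ range h, (starRingEnd ℂ) (z ^ n) := by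
        rw [Finset.sum_product]
        exact (Finset.sum_mul_sum (range h) (range h) (fun n => z ^ n) (fun n => (starRingEnd ℂ) (z ^ n))).symm

lemma normSq_exp_sub_one (θ : ℝ) :
    Complex.normSq (Complex.exp ((θ:ℂ) * Complex.I) - 1) = 2 - 2 * Real.cos θ := by
  have h1 := Real.sin_sq_add_cos_sq θ
  simp only [Complex.normSq_apply, Complex.sub_re, Complex.sub_im,
    Complex.exp_ofReal_mul_I_re, Complex.exp_ofReal_mul_I_im, Complex.one_re, Complex.one_im]
  nlinarith

lemma normSq_geom_le (q j h : ℕ) (hq : 1 < q) (hj1 : 1 ≤ j) (hj2 : j < q) :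
    Complex.normSq (∑ n ∈ range h, (Complex.exp (((2*π*j/q : ℝ):ℂ) * Complex.I)) ^ n)
      ≤ (q:ℝ)^2/4 * (1/(j:ℝ)^2 + 1/((q:ℝ)-(j:ℝ))^2) := by
  have hq0 : (0:ℝ) < q := by positivity
  have hj0 : (0:ℝ) < j := by exact_mod_cast hj1
  have hqj0 : (0:ℝ) < (q:ℝ) - j := by
    have : (j:ℝ) < q := by exact_mod_cast hj2
    linarith
  set θ : ℝ := 2*π*j/q with hθ
  set z : ℂ := Complex.exp ((θ:ℂ) * Complex.I) with hzdef
  set m : ℝ := min (j:ℝ) ((q:ℝ) - j) with hm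
  have hm0 : 0 < m := lt_min hj0 hqj0
  have hm2q : 2 * m ≤ q := by
    rcases le_total (j:ℝ) ((q:ℝ)-j) with h' | h'
    · rw [hm, min_eq_left h']; linarith
    · rw [hm, min_eq_right h']; linarith
  -- lower bound on normSq (z - 1)
  have hcos : Real.cos θ ≤ 1 - 2 / π^2 * (2*π*m/q)^2 := by
    rcases le_total (j:ℝ) ((q:ℝ)-j) with h' | h'
    · have hmeq : m = (j:ℝ) := min_eq_left h'
      have habs : |θ| ≤ π := by
        rw [abs_of_nonneg (by positivity)]
        rw [hθ, div_le_iff₀ hq0]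
        nlinarith [Real.pi_pos]
      have := Real.cos_le_one_sub_mul_cos_sq habs
      rwa [hmeq, ← hθ]
    · have hmeq : m = (q:ℝ) - j := min_eq_right h'
      have hper : Real.cos θ = Real.cos (2*π*((q:ℝ)-j)/q) := by
        have : 2*π*((q:ℝ)-j)/q = 2*π - θ := by
          rw [hθ]; field_simp
        rw [this, Real.cos_two_pi_sub]
      have habs : |2*π*((q:ℝ)-j)/q| ≤ π := by
        rw [abs_of_nonneg (by positivity)]
        rw [div_le_iff₀ hq0]
        nlinarith [Real.pi_pos]
      have := Real.cos_le_one_sub_mul_cos_sq habs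
      rw [hper, hmeq]
      convert this using 3
  have hlow : 16 * m^2 / (q:ℝ)^2 ≤ Complex.normSq (z - 1) := by
    rw [hzdef, normSq_exp_sub_one]
    have hπ := Real.pi_pos
    have expand : 2 / π^2 * (2*π*m/q)^2 = 8 * m^2 / (q:ℝ)^2 := by
      field_simp; ring
    rw [expand] at hcos
    have h16 : 16 * m^2/(q:ℝ)^2 = 2*(8*m^2/(q:ℝ)^2) := by ring
    linarith
  have hz1 : z - 1 ≠ 0 := by
    intro h0
    rw [h0, Complex.normSq_zero] at hlow
    have : (0:ℝ) < 16 * m^2/(q:ℝ)^2 := by positivity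
    linarith
  -- numerator bound
  have habs1 : ‖z‖ = 1 := Complex.norm_exp_ofReal_mul_I θ
  have hnum : Complex.normSq (z ^ h - 1) ≤ 4 := by
    have h1 : ‖z ^ h - 1‖ ≤ 2 := by
      calc ‖z ^ h - 1‖ ≤ ‖z ^ h‖ + ‖(1:ℂ)‖ :=
            norm_sub_le _ _
        _ = 2 := by rw [norm_pow, habs1, norm_one]; norm_num
    rw [← Complex.sq_norm]
    nlinarith [norm_nonneg (z ^ h - 1)]
  -- normSq D = normSq (z^h - 1) / normSq (z - 1)
  have hgeom : (∑ n ∈ range h, z ^ n) * (z - 1) = z ^ h - 1 := geom_sum_mul z h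
  have hDSq : Complex.normSq (∑ n ∈ range h, z ^ n) * Complex.normSq (z - 1)
      = Complex.normSq (z ^ h - 1) := by
    rw [← map_mul, hgeom]
  have hlowpos : (0:ℝ) < 16 * m^2 / (q:ℝ)^2 := by positivity
  have hD : Complex.normSq (∑ n ∈ range h, z ^ n) ≤ 4 / (16 * m^2 / (q:ℝ)^2) := by
    rw [le_div_iff₀ hlowpos]
    calc Complex.normSq (∑ n ∈ range h, z ^ n) * (16 * m ^ 2 / (q:ℝ)^2)
        ≤ Complex.normSq (∑ n ∈ range h, z ^ n) * Complex.normSq (z - 1) :=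
          mul_le_mul_of_nonneg_left hlow (Complex.normSq_nonneg _)
      _ = Complex.normSq (z ^ h - 1) := hDSq
      _ ≤ 4 := hnum
  calc Complex.normSq (∑ n ∈ range h, z ^ n) ≤ 4 / (16 * m^2 / (q:ℝ)^2) := hD
    _ = (q:ℝ)^2 / 4 * (1 / m^2) := by field_simp; ring
    _ ≤ (q:ℝ)^2/4 * (1/(j:ℝ)^2 + 1/((q:ℝ)-(j:ℝ))^2) := by
        apply mul_le_mul_of_nonneg_left _ (by positivity)
        rcases le_total (j:ℝ) ((q:ℝ)-j) with h' | h'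
        · rw [hm, min_eq_left h']
          have : (0:ℝ) ≤ 1/((q:ℝ)-(j:ℝ))^2 := by positivity
          linarith
        · rw [hm, min_eq_right h']
          have : (0:ℝ) ≤ 1/(j:ℝ)^2 := by positivity
          linarith

lemma rsum_main_eq (h q : ℕ) :
    (∑ a ∈ Finset.Icc (-(h : ℤ)) (h : ℤ),
        ((max ((h : ℝ) - |(a : ℝ)|) 0 : ℝ) : ℂ) * ramanujanSum q a).re
      = ∑ j ∈ (Finset.range q).filter (fun j => Nat.Coprime j q),
          Complex.normSq (∑ n ∈ range h,
            (Complex.exp (((2*π*(j:ℝ)/(q:ℝ) : ℝ):ℂ) * Complex.I)) ^ n) := by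
  have step : ∑ a ∈ Finset.Icc (-(h : ℤ)) (h : ℤ),
        ((max ((h : ℝ) - |(a : ℝ)|) 0 : ℝ) : ℂ) * ramanujanSum q a
      = ∑ j ∈ (Finset.range q).filter (fun j => Nat.Coprime j q),
          ((Complex.normSq (∑ n ∈ range h,
            (Complex.exp (((2*π*(j:ℝ)/(q:ℝ) : ℝ):ℂ) * Complex.I)) ^ n) : ℝ) : ℂ) := by
    unfold ramanujanSum
    simp_rw [Finset.mul_sum]
    rw [Finset.sum_comm]
    refine Finset.sum_congr rfl fun j hj => ?_
    set z : ℂ := Complex.exp (((2*π*(j:ℝ)/(q:ℝ) : ℝ):ℂ) * Complex.I) with hz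
    have hzexp : ∀ a : ℤ, Complex.exp (2 * (π:ℂ) * Complex.I * (j : ℂ) * (a : ℂ) / (q : ℂ))
        = z ^ a := by
      intro a
      rw [hz, ← Complex.exp_int_mul]
      congr 1
      push_cast
      ring
    rw [Finset.sum_congr rfl (fun a _ => by rw [hzexp a])]
    exact fejer_identity h z (Complex.norm_exp_ofReal_mul_I _)
  rw [step, Complex.re_sum]
  exact Finset.sum_congr rfl fun j _ => Complex.ofReal_re _


/-- `Σ_a max(h-|a|,0)·c_q(a) ≤ h² + σ₂(q)`, and for `q > 1` it is at most
`σ₂(q)`, where `σ₂(q) = Σ_{d|q} d²`. -/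
theorem fejer_sum_ramanujan_le (h q : ℕ) (hh : 0 < h) (hq : 0 < q) :
    ((∑ a ∈ Finset.Icc (-(h : ℤ)) (h : ℤ),
        ((max ((h : ℝ) - |(a : ℝ)|) 0 : ℝ) : ℂ) * ramanujanSum q a).re
      ≤ (h : ℝ) ^ 2 + ∑ d ∈ q.divisors, (d : ℝ) ^ 2)
    ∧ (1 < q →
        (∑ a ∈ Finset.Icc (-(h : ℤ)) (h : ℤ),
          ((max ((h : ℝ) - |(a : ℝ)|) 0 : ℝ) : ℂ) * ramanujanSum q a).re
          ≤ ∑ d ∈ q.divisors, (d : ℝ) ^ 2) := by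
  have hσq : ((q:ℝ))^2 ≤ ∑ d ∈ q.divisors, (d:ℝ)^2 :=
    Finset.single_le_sum (f := fun d : ℕ => (d:ℝ)^2) (fun d _ => by positivity) (Nat.mem_divisors_self q (by omega))
  have hσ0 : (0:ℝ) ≤ ∑ d ∈ q.divisors, (d:ℝ)^2 :=
    Finset.sum_nonneg (fun d _ => by positivity)
  have part2 : 1 < q →
      (∑ a ∈ Finset.Icc (-(h : ℤ)) (h : ℤ),
          ((max ((h : ℝ) - |(a : ℝ)|) 0 : ℝ) : ℂ) * ramanujanSum q a).re
        ≤ ∑ d ∈ q.divisors, (d : ℝ) ^ 2 := by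
    intro hq1
    rw [rsum_main_eq]
    have hsub : (Finset.range q).filter (fun j => Nat.Coprime j q) ⊆ Finset.Icc 1 (q-1) := by
      intro j hj
      simp only [Finset.mem_filter, Finset.mem_range] at hj
      simp only [Finset.mem_Icc]
      have : j ≠ 0 := by
        rintro rfl
        simp [Nat.Coprime] at hj
        omega
      omega
    have hrefl : ∑ j ∈ Finset.Icc 1 (q-1), 1/((q:ℝ)-(j:ℝ))^2
        = ∑ j ∈ Finset.Icc 1 (q-1), 1/(j:ℝ)^2 := by
      apply Finset.sum_nbij' (i := fun j => q - j) (j := fun j => q - j)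
      · intro a ha; simp only [Finset.mem_Icc] at *; omega
      · intro a ha; simp only [Finset.mem_Icc] at *; omega
      · intro a ha; simp only [Finset.mem_Icc] at ha; omega
      · intro a ha; simp only [Finset.mem_Icc] at ha; omega
      · intro a ha
        simp only [Finset.mem_Icc] at ha
        have : ((q - a : ℕ) : ℝ) = (q:ℝ) - a := by
          push_cast [Nat.cast_sub (by omega : a ≤ q)]; ring
        rw [this]
    have hsum2 : ∑ j ∈ Finset.Icc 1 (q-1), (1:ℝ)/(j:ℝ)^2 ≤ 2 := by
      refine (sum_inv_sq_le (q-1)).trans ?_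
      have : (0:ℝ) ≤ 1/((q-1:ℕ):ℝ) := by positivity
      linarith
    calc ∑ j ∈ (Finset.range q).filter (fun j => Nat.Coprime j q),
          Complex.normSq (∑ n ∈ range h,
            (Complex.exp (((2*π*(j:ℝ)/(q:ℝ) : ℝ):ℂ) * Complex.I)) ^ n)
        ≤ ∑ j ∈ (Finset.range q).filter (fun j => Nat.Coprime j q),
            (q:ℝ)^2/4 * (1/(j:ℝ)^2 + 1/((q:ℝ)-(j:ℝ))^2) := by
          refine Finset.sum_le_sum fun j hj => ?_
          simp only [Finset.mem_filter, Finset.mem_range] at hj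
          have hj0 : j ≠ 0 := by
            rintro rfl
            simp [Nat.Coprime] at hj
            omega
          exact normSq_geom_le q j h hq1 (by omega) hj.1
      _ ≤ ∑ j ∈ Finset.Icc 1 (q-1), (q:ℝ)^2/4 * (1/(j:ℝ)^2 + 1/((q:ℝ)-(j:ℝ))^2) := by
          refine Finset.sum_le_sum_of_subset_of_nonneg hsub fun j hj _ => ?_
          have h1 : (0:ℝ) ≤ 1/(j:ℝ)^2 := by positivity
          have h2 : (0:ℝ) ≤ 1/((q:ℝ)-(j:ℝ))^2 := by positivity
          positivity
      _ = (q:ℝ)^2/4 * ((∑ j ∈ Finset.Icc 1 (q-1), 1/(j:ℝ)^2)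
            + ∑ j ∈ Finset.Icc 1 (q-1), 1/((q:ℝ)-(j:ℝ))^2) := by
          rw [← Finset.sum_add_distrib, ← Finset.mul_sum]
      _ ≤ (q:ℝ)^2/4 * (2 + 2) := by
          rw [hrefl]
          have hq20 : (0:ℝ) ≤ (q:ℝ)^2/4 := by positivity
          apply mul_le_mul_of_nonneg_left _ hq20
          linarith
      _ = (q:ℝ)^2 := by ring
      _ ≤ ∑ d ∈ q.divisors, (d:ℝ)^2 := hσq
  refine ⟨?_, part2⟩
  rcases eq_or_lt_of_le (show 1 ≤ q from hq) with hq1 | hq1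
  · -- q = 1
    rw [rsum_main_eq]
    rw [← hq1]
    have : (Finset.range 1).filter (fun j => Nat.Coprime j 1) = {0} := by decide
    rw [this]
    rw [Finset.sum_singleton]
    have h0 : ((2*π*((0:ℕ):ℝ)/((1:ℕ):ℝ) : ℝ):ℂ) = 0 := by norm_num
    rw [h0, zero_mul, Complex.exp_zero]
    simp only [one_pow, Finset.sum_const, Finset.card_range, nsmul_eq_mul, mul_one]
    have : Complex.normSq ((h:ℂ)) = (h:ℝ)^2 := by
      rw [Complex.normSq_natCast]; ring
    rw [this]
    have : ∑ d ∈ (1:ℕ).divisors, (d:ℝ)^2 = 1 := by simp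
    rw [this]
    linarith
  · have hh2 : (0:ℝ) ≤ (h:ℝ)^2 := by positivity
    linarith [part2 hq1]

end helpers
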